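/- Let Ê be the two-dimensional ℂ-vector space with basis {x, x'}, made into a representation of the infinite dihedral group W' by s₁(x) = −x, s₂(x) = −x, s₁(x') = x' + x, s₂(x') = x' (these assignments indeed satisfy s₁² = s₂² = 1). Then the set of sequences (x_n)_{n∈ℤ} of elements of Ê satisfying, for i ∈ {1,2}, s_i(x_n) = −x_n whenever n ≡ i (mod 2) and s_i(x_n) = x_n + x_{n−1} + x_{n+1} whenever n ≡ i+1 (mod 2), is a ℂ-vector space of dimension exactly 2; moreover every such sequence satisfies x_n ∈ ℂ·x for all n ∈ ℤ, and, writing x_n = u_n·x, the scalars satisfy −u_n = u_n + u_{n−1} + u_{n+1} for all n and the sequence is uniquely determined by u₀ and u₁. -/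

import Mathlib

noncomputable section

/-- The two-dimensional vector space `Ê` with basis `{x, x'}`. -/
abbrev Ehat : Type := ℂ × ℂ

/-- The basis vector `x` of `Ê`. -/
def xv : Ehat := (1, 0)

/-- The basis vector `x'` of `Ê`. -/
def xv' : Ehat := (0, 1)

/-- The action of `s₁` on `Ê`: `s₁ x = -x`, `s₁ x' = x' + x`. -/
def T1 : Ehat →ₗ[ℂ] Ehat :=
  LinearMap.prod (-(LinearMap.fst ℂ ℂ ℂ) + LinearMap.snd ℂ ℂ ℂ) (LinearMap.snd ℂ ℂ ℂ)

/-- The action of `s₂` on `Ê`: `s₂ x = -x`, `s₂ x' = x'`. -/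
def T2 : Ehat →ₗ[ℂ] Ehat :=
  LinearMap.prod (-(LinearMap.fst ℂ ℂ ℂ)) (LinearMap.snd ℂ ℂ ℂ)

/-- The set of sequences `(x_n)_{n ∈ ℤ}` in `Ê` with `s_i x_n = -x_n` for `n ≡ i (mod 2)`
and `s_i x_n = x_n + x_{n-1} + x_{n+1}` for `n ≡ i+1 (mod 2)`, `i ∈ {1, 2}`. -/
def SeqSet : Set (ℤ → Ehat) :=
  {f | ∀ n : ℤ,
    (if n % 2 = 1 then T1 (f n) = -f n else T1 (f n) = f n + f (n - 1) + f (n + 1)) ∧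
    (if n % 2 = 0 then T2 (f n) = -f n else T2 (f n) = f n + f (n - 1) + f (n + 1))}

@[simp] lemma T1_apply (v : Ehat) : T1 v = (-v.1 + v.2, v.2) := rfl

@[simp] lemma T2_apply (v : Ehat) : T2 v = (-v.1, v.2) := rfl

lemma mem_seqSet_iff (f : ℤ → Ehat) :
    f ∈ SeqSet ↔ (∀ n : ℤ, (f n).2 = 0) ∧
      (∀ n : ℤ, -(f n).1 = (f n).1 + (f (n - 1)).1 + (f (n + 1)).1) := by
  constructor
  · intro h
    have hb : ∀ n : ℤ, (f n).2 = 0 := by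
      intro n
      rcases Int.emod_two_eq n with h0 | h1
      · have h2 := (h n).2
        rw [if_pos h0] at h2
        have := congrArg Prod.snd h2
        simp at this
        linear_combination (1/2 : ℂ) * this
      · have h2 := (h n).1
        rw [if_pos h1] at h2
        have := congrArg Prod.snd h2
        simp at this
        linear_combination (1/2 : ℂ) * this
    refine ⟨hb, fun n => ?_⟩
    rcases Int.emod_two_eq n with h0 | h1
    · have h2 := (h n).1
      rw [if_neg (by omega)] at h2
      have := congrArg Prod.fst h2
      simp [hb n] at this
      linear_combination this
    · have h2 := (h n).2
      rw [if_neg (by omega)] at h2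
      have := congrArg Prod.fst h2
      simp at this
      linear_combination this
  · rintro ⟨hb, hr⟩ n
    constructor
    · split_ifs with h
      · refine Prod.ext ?_ ?_ <;> simp [hb n]
      · refine Prod.ext ?_ ?_ <;> simp [hb]
        linear_combination hr n
    · split_ifs with h
      · refine Prod.ext ?_ ?_ <;> simp [hb n]
      · refine Prod.ext ?_ ?_ <;> simp [hb]
        linear_combination hr n

lemma aux_zero (a : ℤ → ℂ)
    (hr : ∀ n : ℤ, -(a n) = a n + a (n - 1) + a (n + 1))
    (h0 : a 0 = 0) (h1 : a 1 = 0) : ∀ n, a n = 0 := by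
  have key : ∀ n : ℤ, a n = 0 ∧ a (n + 1) = 0 := by
    intro n
    induction n using Int.induction_on with
    | zero => exact ⟨h0, h1⟩
    | succ i ih =>
      refine ⟨ih.2, ?_⟩
      have h := hr ((i : ℤ) + 1)
      have e1 : ((i : ℤ) + 1 - 1) = i := by ring
      rw [e1] at h
      linear_combination -h - 2 * ih.2 - ih.1
    | pred i ih =>
      have h := hr (-(i : ℤ))
      have e1 : (-(i : ℤ) - 1 + 1) = -i := by ring
      refine ⟨?_, by rw [e1]; exact ih.1⟩
      linear_combination -h - 2 * ih.1 - ih.2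
  exact fun n => (key n).1

/-- The submodule of solution sequences. -/
def Q : Submodule ℂ (ℤ → Ehat) where
  carrier := SeqSet
  zero_mem' := by
    show (0 : ℤ → Ehat) ∈ SeqSet
    rw [mem_seqSet_iff]
    simp
  add_mem' := by
    intro f g hf hg
    show f + g ∈ SeqSet
    obtain ⟨hf1, hf2⟩ := (mem_seqSet_iff f).mp hf
    obtain ⟨hg1, hg2⟩ := (mem_seqSet_iff g).mp hg
    rw [mem_seqSet_iff]
    refine ⟨fun n => ?_, fun n => ?_⟩ <;> simp [hf1, hg1]
    linear_combination hf2 n + hg2 n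
  smul_mem' := by
    intro c f hf
    show c • f ∈ SeqSet
    obtain ⟨hf1, hf2⟩ := (mem_seqSet_iff f).mp hf
    rw [mem_seqSet_iff]
    refine ⟨fun n => ?_, fun n => ?_⟩ <;> simp [hf1]
    linear_combination c * hf2 n

lemma Q_coe : (Q : Set (ℤ → Ehat)) = SeqSet := rfl

/-- Evaluation at 0 and 1, first coordinates. -/
def ev : Q →ₗ[ℂ] ℂ × ℂ where
  toFun f := ((f.1 0).1, (f.1 1).1)
  map_add' f g := rfl
  map_smul' c f := rfl

lemma uniq (f : ℤ → Ehat) (hf : f ∈ SeqSet) (g : ℤ → Ehat) (hg : g ∈ SeqSet)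
    (h0 : f 0 = g 0) (h1 : f 1 = g 1) : f = g := by
  have hsub : f - g ∈ SeqSet := Q.sub_mem hf hg
  rw [mem_seqSet_iff] at hsub
  have hz := aux_zero (fun n => ((f - g) n).1) hsub.2
    (by simp [h0]) (by simp [h1])
  funext n
  have hb := hsub.1 n
  have ha := hz n
  simp only [Pi.sub_apply] at hb ha
  have : f n - g n = 0 := Prod.ext (by simpa using ha) (by simpa using hb)
  exact sub_eq_zero.mp this

lemma ev_bijective : Function.Bijective ev := by
  constructor
  · intro f g h
    obtain ⟨he0, he1⟩ := Prod.mk.injEq _ _ _ _ ▸ h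
    have hf : f.1 ∈ SeqSet := f.2
    have hg : g.1 ∈ SeqSet := g.2
    apply Subtype.ext
    refine uniq f.1 hf g.1 hg ?_ ?_
    · have hbf := ((mem_seqSet_iff f.1).mp hf).1 0
      have hbg := ((mem_seqSet_iff g.1).mp hg).1 0
      exact Prod.ext he0 (by rw [hbf, hbg])
    · have hbf := ((mem_seqSet_iff f.1).mp hf).1 1
      have hbg := ((mem_seqSet_iff g.1).mp hg).1 1
      exact Prod.ext he1 (by rw [hbf, hbg])
  · rintro ⟨c, d⟩
    set A : ℤ → ℂ := fun n => (-1 : ℂ) ^ n * (c - (c + d) * n) with hA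
    have hmem : (fun n => ((A n, 0) : Ehat)) ∈ SeqSet := by
      rw [mem_seqSet_iff]
      refine ⟨fun n => rfl, fun n => ?_⟩
      simp only [hA]
      have h1 : (-1 : ℂ) ^ (n + 1) = -(-1 : ℂ) ^ n := by
        rw [zpow_add_one₀ (by norm_num)]; ring
      have h2 : (-1 : ℂ) ^ (n - 1) = -(-1 : ℂ) ^ n := by
        rw [zpow_sub_one₀ (by norm_num)]; norm_num
      rw [h1, h2]
      push_cast
      ring
    refine ⟨⟨_, hmem⟩, ?_⟩
    have e0 : A 0 = c := by simp [hA]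
    have e1 : A 1 = d := by simp only [hA]; push_cast; ring_nf
    simp only [ev, LinearMap.coe_mk, AddHom.coe_mk]
    exact Prod.ext e0 e1

theorem statement15 :
    (T1 xv = -xv ∧ T2 xv = -xv ∧ T1 xv' = xv' + xv ∧ T2 xv' = xv') ∧
    T1 ∘ₗ T1 = LinearMap.id ∧ T2 ∘ₗ T2 = LinearMap.id ∧
    (∃ Q : Submodule ℂ (ℤ → Ehat), (Q : Set (ℤ → Ehat)) = SeqSet ∧
      Module.finrank ℂ Q = 2) ∧
    (∀ f ∈ SeqSet, ∀ n : ℤ, ∃ u : ℂ, f n = u • xv) ∧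
    (∀ f ∈ SeqSet, ∀ u : ℤ → ℂ, (∀ n : ℤ, f n = u n • xv) →
      ∀ n : ℤ, -u n = u n + u (n - 1) + u (n + 1)) ∧
    (∀ f ∈ SeqSet, ∀ g ∈ SeqSet, f 0 = g 0 → f 1 = g 1 → f = g) := by
  refine ⟨⟨?_, ?_, ?_, ?_⟩, ?_, ?_, ?_, ?_, ?_, ?_⟩
  · simp [xv, Prod.ext_iff]
  · simp [xv, Prod.ext_iff]
  · simp [xv, xv', Prod.ext_iff]
  · simp [xv', Prod.ext_iff]
  · apply LinearMap.ext; intro v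
    refine Prod.ext ?_ ?_ <;> simp <;> ring
  · apply LinearMap.ext; intro v
    refine Prod.ext ?_ ?_ <;> simp
  · refine ⟨Q, Q_coe, ?_⟩
    have e : Q ≃ₗ[ℂ] ℂ × ℂ := LinearEquiv.ofBijective ev ev_bijective
    rw [e.finrank_eq]
    simp [Module.finrank_prod]
  · intro f hf n
    have hb := ((mem_seqSet_iff f).mp hf).1 n
    exact ⟨(f n).1, Prod.ext (by simp [xv]) (by simp [xv, hb])⟩
  · intro f hf u hu n
    have hr := ((mem_seqSet_iff f).mp hf).2 n
    have h1 : ∀ m : ℤ, (f m).1 = u m := fun m => by rw [hu m]; simp [xv]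
    rw [h1, h1, h1] at hr
    exact hr
  · exact uniq
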